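/- Let M be a simple, cosimple, connected matroid, let F = (x_1, …, x_k) be a fan of M, and let (A,B) be a 2-separation of M. Then M has a 2-separation (A', B') with {x_1, …, x_k} ⊆ A'. -/

import Mathlib

open Matroid Set

namespace ExMinors

variable {α β γ : Type}

/-! ### Basic matroid notions -/

/-- The (extended, `ℕ∞`-valued) rank of a set `X` in a matroid `M`: the supremum of the
cardinalities of independent subsets of `X`. -/
noncomputable def eRank (M : Matroid α) (X : Set α) : ℕ∞ :=
  ⨆ I ∈ {I | M.Indep I ∧ I ⊆ X}, I.encard

/-- `(A, B)` is a 2-separation of `M`: a partition of the ground set into two parts of size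
at least two with `r A + r B ≤ r M + 1`. -/
def TwoSep (M : Matroid α) (A B : Set α) : Prop :=
  A ∪ B = M.E ∧ Disjoint A B ∧ 2 ≤ A.encard ∧ 2 ≤ B.encard ∧
    eRank M A + eRank M B ≤ eRank M M.E + 1

/-- `C` is a circuit of `M` : a minimal dependent set. -/
def IsCircuitM (M : Matroid α) (C : Set α) : Prop :=
  C ⊆ M.E ∧ ¬ M.Indep C ∧ ∀ x ∈ C, M.Indep (C \ {x})

/-- A matroid is connected if it is nonempty and every two distinct elements of the
ground set lie on a common circuit. -/
def ConnectedM (M : Matroid α) : Prop :=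
  M.E.Nonempty ∧ ∀ e ∈ M.E, ∀ f ∈ M.E, e = f ∨ ∃ C, IsCircuitM M C ∧ e ∈ C ∧ f ∈ C

/-- A matroid is 3-connected if it is connected and has no 2-separation. -/
def ThreeConnected (M : Matroid α) : Prop :=
  ConnectedM M ∧ ∀ A B, ¬ TwoSep M A B

/-- A matroid is simple if every subset of the ground set with at most two elements
is independent. -/
def SimpleM (M : Matroid α) : Prop :=
  ∀ e ∈ M.E, ∀ f ∈ M.E, M.Indep {e, f}

def CosimpleM (M : Matroid α) : Prop := SimpleM M✶

/-! ### Minors -/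

/-- Deletion of the set `D` from `M`. -/
def del (M : Matroid α) (D : Set α) : Matroid α := M ↾ (M.E \ D)

/-- Contraction of the set `C` in `M`, defined by duality. -/
def con (M : Matroid α) (C : Set α) : Matroid α := (del M✶ C)✶

/-- `N` is a minor of `M`. -/
def IsMinor (N M : Matroid α) : Prop := ∃ C D : Set α, N = del (con M C) D

/-! ### Isomorphism -/

/-- `φ` is an isomorphism from `M` to `N`: a bijection between the ground sets which
preserves independence. -/
def MIsoVia (M : Matroid α) (N : Matroid β) (φ : α → β) : Prop :=
  Set.BijOn φ M.E N.E ∧ ∀ I ⊆ M.E, (M.Indep I ↔ N.Indep (φ '' I))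

/-- `M` and `N` are isomorphic matroids. -/
def MIso (M : Matroid α) (N : Matroid β) : Prop := ∃ φ, MIsoVia M N φ

/-- `φ` is an automorphism of `M`. -/
def IsAuto (M : Matroid α) (φ : α → α) : Prop := MIsoVia M M φ

/-- `M` has a minor isomorphic to the matroid `N`. -/
def HasMinorIso (M : Matroid α) (N : Matroid β) : Prop :=
  ∃ N' : Matroid α, IsMinor N' M ∧ MIso N' N

/-! ### Representations -/

/-- `M` is the matroid on ground set `range g` (with `g` injective) represented by the
family of column vectors `cols`. -/
def ReppedBy {ι F : Type} [Field F] {n : ℕ} (M : Matroid α) (cols : ι → Fin n → F)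
    (g : ι → α) : Prop :=
  Function.Injective g ∧ M.E = Set.range g ∧
    ∀ J : Set ι, (M.Indep (g '' J) ↔ LinearIndependent F (J.restrict cols))

/-- `M` is isomorphic to the matroid of the `k` columns `cols` over the field `F`. -/
def IsColM {F : Type} [Field F] {k n : ℕ} (cols : Fin k → Fin n → F) (M : Matroid α) : Prop :=
  ∃ g : Fin k → α, ReppedBy M cols g

/-- `M` is representable over the field `F` (by vectors in some finite power of `F`). -/
def RepOver (F : Type) [Field F] (M : Matroid α) : Prop :=
  ∃ (n : ℕ) (v : α → Fin n → F), ∀ I ⊆ M.E, (M.Indep I ↔ LinearIndependent F (I.restrict v))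

/-! ### Named matroids -/

/-- `M` is isomorphic to the uniform matroid `U_{m,n}`. -/
def IsUniform (m n : ℕ) (M : Matroid α) : Prop :=
  M.E.Finite ∧ M.E.ncard = n ∧ ∀ I ⊆ M.E, (M.Indep I ↔ I.ncard ≤ m)

/-- The columns of a `GF(2)`-representation of the Fano matroid `F₇`. -/
def fanoCols : Fin 7 → Fin 3 → ZMod 2 :=
  ![![1,0,0], ![0,1,0], ![0,0,1], ![0,1,1], ![1,0,1], ![1,1,0], ![1,1,1]]

/-- `M` is isomorphic to the Fano matroid `F₇`. -/
def IsF7 (M : Matroid α) : Prop := IsColM fanoCols M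

/-- `M` is isomorphic to `F₇*`. -/
def IsF7dual (M : Matroid α) : Prop := IsF7 M✶

/-- The columns of a `GF(3)`-representation of the non-Fano matroid `F₇⁻`. -/
def nonFanoCols : Fin 7 → Fin 3 → ZMod 3 :=
  ![![1,0,0], ![0,1,0], ![0,0,1], ![0,1,1], ![1,0,1], ![1,1,0], ![1,1,1]]

/-- `M` is isomorphic to the non-Fano matroid `F₇⁻`. -/
def IsNonFano (M : Matroid α) : Prop := IsColM nonFanoCols M

/-- `M` is isomorphic to `(F₇⁻)*`. -/
def IsNonFanoDual (M : Matroid α) : Prop := IsNonFano M✶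

/-- The columns `[I₄ | A₈]` of the `GF(3)`-representation of `P₈`. -/
def p8Cols : Fin 8 → Fin 4 → ZMod 3 :=
  ![![1,0,0,0], ![0,1,0,0], ![0,0,1,0], ![0,0,0,1],
    ![0,1,1,-1], ![1,0,1,1], ![1,1,0,1], ![-1,1,1,0]]

/-- `M` is isomorphic to `P₈`. -/
def IsP8 (M : Matroid α) : Prop := IsColM p8Cols M

/-- `M` is isomorphic to `P₆`: rank 3, six elements, whose only non-spanning circuit is a
single 3-point line. -/
def IsP6 (M : Matroid α) : Prop :=
  M.E.Finite ∧ M.E.ncard = 6 ∧ ∃ T ⊆ M.E, T.ncard = 3 ∧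
    ∀ I ⊆ M.E, (M.Indep I ↔ I.ncard ≤ 3 ∧ I ≠ T)

/-- The columns of a `GF(3)`-representation of `AG(2,3)`: the nine points `(1, x, y)`. -/
def ag23Cols : Fin 9 → Fin 3 → ZMod 3 :=
  fun j => ![1, ((j : ℕ) % 3 : ZMod 3), ((j : ℕ) / 3 : ZMod 3)]

/-- `M` is isomorphic to the ternary affine plane `AG(2,3)`. -/
def IsAG23 (M : Matroid α) : Prop := IsColM ag23Cols M

/-- The columns of a `GF(3)`-representation of `AG(2,3)\e` (one point deleted). -/
def agdeCols : Fin 8 → Fin 3 → ZMod 3 :=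
  fun j => ![1, ((j : ℕ) % 3 : ZMod 3), ((j : ℕ) / 3 : ZMod 3)]

/-- `M` is isomorphic to `AG(2,3)\e`. -/
def IsAGde (M : Matroid α) : Prop := IsColM agdeCols M

/-- `M` is isomorphic to `(AG(2,3)\e)*`. -/
def IsAGdeDual (M : Matroid α) : Prop := IsAGde M✶

/-- The columns `[I₄ | A]` of the `GF(3)`-representation of `Δ₃(AG(2,3)\e)`, where `A` has
rows `(1,0,-1,0), (1,0,1,1), (1,1,0,1), (0,1,1,-1)`. -/
def deltaAGCols : Fin 8 → Fin 4 → ZMod 3 :=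
  ![![1,0,0,0], ![0,1,0,0], ![0,0,1,0], ![0,0,0,1],
    ![1,1,1,0], ![0,0,1,1], ![-1,1,0,1], ![0,1,1,-1]]

/-- `M` is isomorphic to `Δ₃(AG(2,3)\e)`. -/
def IsDeltaAG (M : Matroid α) : Prop := IsColM deltaAGCols M

/-- `X` is a circuit-hyperplane of `M`. -/
def IsCircuitHyperplane (M : Matroid α) (X : Set α) : Prop :=
  IsCircuitM M X ∧ M.IsFlat X ∧ eRank M X + 1 = eRank M M.E

/-- `M` is isomorphic to `P₈⁼`, obtained from `P₈` by relaxing its two disjoint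
circuit-hyperplanes. -/
def IsP8eq (M : Matroid α) : Prop :=
  ∃ (N : Matroid α) (X Y : Set α), IsP8 N ∧ N.E = M.E ∧
    IsCircuitHyperplane N X ∧ IsCircuitHyperplane N Y ∧ Disjoint X Y ∧
    ∀ B ⊆ M.E, (M.IsBase B ↔ (N.IsBase B ∨ B = X ∨ B = Y))

/-- `M` is isomorphic to the Steiner-system matroid `S(5,6,12)`: a rank-6 paving matroid on
12 elements whose circuit-hyperplanes are the blocks of an `S(5,6,12)` Steiner system. -/
def IsSteiner (M : Matroid α) : Prop :=
  ∃ Bl : Set (Set α), M.E.Finite ∧ M.E.ncard = 12 ∧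
    (∀ b ∈ Bl, b ⊆ M.E ∧ b.ncard = 6) ∧
    (∀ s ⊆ M.E, s.ncard = 5 → ∃! b, b ∈ Bl ∧ s ⊆ b) ∧
    (∀ I ⊆ M.E, (M.Indep I ↔ I.ncard ≤ 6 ∧ I ∉ Bl))

/-! ### Excluded-minor classes and superfluous subsets -/

/-- The class of (finite) matroids on `ℕ` having no minor isomorphic to `P i` for `i ∈ S`. -/
def ExClass {k : ℕ} (P : Fin k → Matroid ℕ → Prop) (S : Finset (Fin k)) : Set (Matroid ℕ) :=
  {M | M.E.Finite ∧ ∀ i ∈ S, ¬ ∃ N, IsMinor N M ∧ P i N}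

/-- With `P` listing the excluded minors of a class, the subset `E'` of the excluded minors
is superfluous if `ex(E − E') − ex(E)` contains only finitely many 3-connected matroids up
to isomorphism. -/
def Superfluous {k : ℕ} (P : Fin k → Matroid ℕ → Prop) (E' : Finset (Fin k)) : Prop :=
  ∃ L : List (Matroid ℕ),
    ∀ M ∈ ExClass P (Finset.univ \ E') \ ExClass P Finset.univ,
      ThreeConnected M → ∃ N ∈ L, MIso M N

/-! ### Lines, triangles, triads and fans -/

/-- `L` is a 3-point line of `M`: a rank-2 flat with exactly three elements. -/
def IsLine3 (M : Matroid α) (L : Set α) : Prop :=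
  M.IsFlat L ∧ eRank M L = 2 ∧ L.encard = 3

/-- A triangle is a 3-element circuit. -/
def IsTriangle (M : Matroid α) (T : Set α) : Prop := IsCircuitM M T ∧ T.encard = 3

/-- A triad is a 3-element cocircuit. -/
def IsTriad (M : Matroid α) (T : Set α) : Prop := IsCircuitM M✶ T ∧ T.encard = 3

/-- `(x 1, …, x k)` is a fan of `M`: an ordered sequence of distinct elements of the ground
set such that each three consecutive elements form a triangle or a triad, and triangles and
triads alternate. -/
def IsFan (M : Matroid α) (k : ℕ) (x : ℕ → α) : Prop :=
  3 ≤ k ∧ Set.InjOn x (Set.Icc 1 k) ∧ (∀ i, 1 ≤ i → i ≤ k → x i ∈ M.E) ∧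
  ∀ i, 1 ≤ i → i + 2 ≤ k →
    ((IsTriangle M {x i, x (i+1), x (i+2)} ∨ IsTriad M {x i, x (i+1), x (i+2)}) ∧
      (i + 3 ≤ k →
        (IsTriangle M {x i, x (i+1), x (i+2)} → IsTriad M {x (i+1), x (i+2), x (i+3)}) ∧
        (IsTriad M {x i, x (i+1), x (i+2)} → IsTriangle M {x (i+1), x (i+2), x (i+3)})))

/-! ### Full closure -/

/-- The full closure of `X`: the intersection of all sets containing `X` that are closed in
both `M` and `M✶`. -/
def Fcl (M : Matroid α) (X : Set α) : Set α :=
  ⋂₀ {Y | X ⊆ Y ∧ M.closure Y = Y ∧ M✶.closure Y = Y}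

/-! ### Wheels and generalized parallel connections -/

/-- The columns of the standard `ℚ`-representation of the rank-`n` wheel `W_n`:
spoke `i` is `e_i`, and rim element `i` is `e_i - e_{i+1}` (indices mod `n`). -/
noncomputable def wheelCols (n : ℕ) : Fin n ⊕ Fin n → Fin n → ℚ
  | .inl i => Pi.single i 1
  | .inr i => Pi.single i 1 - Pi.single ⟨((i : ℕ) + 1) % n, Nat.mod_lt _ i.pos⟩ 1

/-- `W` is a copy of the rank-`n` wheel, with spokes `s 1, …, s n` and rim elements
`r 1, …, r n`, so that `{s i, r i, s (i+1)}` is a triangle and `{r i, s (i+1), r (i+1)}` is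
a triad (indices mod `n`). -/
def IsWheel (W : Matroid α) (n : ℕ) (s r : ℕ → α) : Prop :=
  ReppedBy W (wheelCols n)
    (Sum.elim (fun i : Fin n => s ((i : ℕ) + 1)) (fun i : Fin n => r ((i : ℕ) + 1)))

/-- `P` is the generalized parallel connection of `W` and `M` (over the common restriction
`W.E ∩ M.E`, assumed to be a modular flat of `W`), characterized by its flats:
`F` is a flat of `P` iff `F ∩ W.E` is a flat of `W` and `F ∩ M.E` is a flat of `M`. -/
def IsGPC (W M P : Matroid α) : Prop :=
  P.E = W.E ∪ M.E ∧ ∀ F ⊆ P.E, (P.IsFlat F ↔ W.IsFlat (F ∩ W.E) ∧ M.IsFlat (F ∩ M.E))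

/-- `L = Λ_T^n(M)` for the triangle `T = {x₁, x₂, x₃}` of `M` : the generalized parallel
connection of the wheel `W_n` with `M`, where `s 1, r n, s n` of `W_n` are relabelled
`x₁, x₂, x₃`, with `x₂` deleted. -/
def IsLambdaExt (M : Matroid α) (x₁ x₂ x₃ : α) (n : ℕ) (L : Matroid α) : Prop :=
  ∃ (W P : Matroid α) (s r : ℕ → α), IsWheel W n s r ∧
    s 1 = x₁ ∧ r n = x₂ ∧ s n = x₃ ∧ W.E ∩ M.E = {x₁, x₂, x₃} ∧
    IsGPC W M P ∧ L = del P {x₂}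

/-- `D = Δ_T(M)`, the `Δ-Y` exchange of `M` on the coindependent triangle
`T = {x₁, x₂, x₃}`: the generalized parallel connection of `M(K₄) = W₃` with `M` across
`T`, with `T` deleted. -/
def IsDeltaY (M : Matroid α) (x₁ x₂ x₃ : α) (D : Matroid α) : Prop :=
  ∃ (W P : Matroid α) (s r : ℕ → α), IsWheel W 3 s r ∧
    s 1 = x₁ ∧ r 3 = x₂ ∧ s 3 = x₃ ∧ W.E ∩ M.E = {x₁, x₂, x₃} ∧
    IsGPC W M P ∧ D = del P {x₁, x₂, x₃}

/-- The columns `[I₃ | A]` of the `GF(3)`-representation of the matroid `M₈`, where `A` has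
rows `(1,1,0,1,0), (1,0,1,1,1), (0,1,1,1,-1)`. -/
def m8Cols : Fin 8 → Fin 3 → ZMod 3 :=
  ![![1,0,0], ![0,1,0], ![0,0,1], ![1,1,0], ![1,0,1], ![0,1,1], ![1,1,1], ![0,1,-1]]


section Aux

variable {M : Matroid α} {I J X Y A B T : Set α} {e : α}

private lemma eRank_basis' (hI : M.IsBasis' I X) : eRank M X = I.encard := by
  apply le_antisymm
  · refine iSup₂_le fun J hJ => ?_
    obtain ⟨J', hJ', hJJ'⟩ := hJ.1.subset_isBasis'_of_subset hJ.2
    have := (Matroid.isBase_restrict_iff'.2 hJ').encard_eq_encard_of_isBase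
      (Matroid.isBase_restrict_iff'.2 hI)
    exact (encard_mono hJJ').trans this.le
  · exact le_iSup₂_of_le I ⟨hI.indep, hI.subset⟩ le_rfl

private lemma eRank_mono (h : X ⊆ Y) : eRank M X ≤ eRank M Y :=
  iSup₂_le fun I hI => le_iSup₂_of_le I ⟨hI.1, hI.2.trans h⟩ le_rfl

private lemma eRank_le_encard (M : Matroid α) (X : Set α) : eRank M X ≤ X.encard :=
  iSup₂_le fun _ hI => encard_mono hI.2

private lemma eRank_insert_mem_closure (hX : X ⊆ M.E) (he : e ∈ M.closure X) :
    eRank M (insert e X) = eRank M X := by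
  obtain ⟨I, hI⟩ := M.exists_isBasis' X
  have hIX := hI.isBasis hX
  have h2 : M.IsBasis I (insert e X) := by
    refine hIX.indep.isBasis_of_subset_of_subset_closure
      (hIX.subset.trans (subset_insert _ _)) ?_
    rw [hIX.closure_eq_closure]
    exact insert_subset he (M.subset_closure X hX)
  rw [eRank_basis' hI, eRank_basis' h2.isBasis']

private lemma eRank_insert_le (M : Matroid α) (e : α) (X : Set α) :
    eRank M (insert e X) ≤ eRank M X + 1 := by
  obtain ⟨I, hI⟩ := M.exists_isBasis' X
  obtain ⟨J, hJ, hIJ⟩ := hI.indep.subset_isBasis'_of_subset (hI.subset.trans (subset_insert _ _))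
  have hJI : J ⊆ insert e I := by
    intro f hf
    by_contra hfI
    simp only [mem_insert_iff, not_or] at hfI
    have hfX : f ∈ X := by
      rcases hJ.subset hf with h | h
      · exact absurd h hfI.1
      · exact h
    exact hI.insert_not_indep ⟨hfX, hfI.2⟩ (hJ.indep.subset (insert_subset hf hIJ))
  rw [eRank_basis' hI, eRank_basis' hJ]
  exact (encard_mono hJI).trans (encard_insert_le _ _)

private lemma eRank_insert_not_mem_closure (hX : X ⊆ M.E) (he : e ∈ M.E)
    (h : e ∉ M.closure X) : eRank M (insert e X) = eRank M X + 1 := by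
  obtain ⟨I, hI⟩ := M.exists_isBasis' X
  have hIX := hI.isBasis hX
  have hecl : e ∉ M.closure I := by rwa [hIX.closure_eq_closure]
  have heI : e ∉ I := fun h' => hecl (M.mem_closure_of_mem h' hIX.indep.subset_ground)
  have hind : M.Indep (insert e I) := by
    rw [hIX.indep.insert_indep_iff_of_notMem heI]; exact ⟨he, hecl⟩
  have h2 : M.IsBasis (insert e I) (insert e X) := by
    refine hind.isBasis_of_subset_of_subset_closure (insert_subset_insert hIX.subset) ?_
    refine insert_subset (M.mem_closure_of_mem (mem_insert _ _) hind.subset_ground) ?_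
    exact ((M.subset_closure X hX).trans
      (by rw [← hIX.closure_eq_closure]; exact M.closure_subset_closure (subset_insert _ _)))
  rw [eRank_basis' hI, eRank_basis' h2.isBasis', encard_insert_of_notMem heI]

private lemma eRank_spanning (h : M.Spanning X) : eRank M X = eRank M M.E := by
  obtain ⟨I, hI⟩ := M.exists_isBasis' X
  have hIX := hI.isBasis h.subset_ground
  have hbase : M.IsBase I := by
    refine hIX.indep.isBase_of_ground_subset_closure ?_
    rw [hIX.closure_eq_closure, h.closure_eq]
  rw [eRank_basis' hI, eRank_basis' hbase.isBasis_ground.isBasis']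

private lemma twoSep_symm (h : TwoSep M A B) : TwoSep M B A := by
  obtain ⟨hU, hd, h2, h2', hr⟩ := h
  exact ⟨by rwa [union_comm], hd.symm, h2', h2, by rwa [add_comm]⟩

private lemma eRank_ground_ne_top (hfin : M.E.Finite) : eRank M M.E ≠ ⊤ :=
  fun h => (h ▸ eRank_le_encard M M.E).not_gt hfin.encard_lt_top |>.elim

/-- In a simple cosimple matroid, both sides of a 2-separation have at least 3 elements. -/
private lemma twoSep_three_le (hfin : M.E.Finite) (hs : SimpleM M) (hcs : CosimpleM M)
    (hAB : TwoSep M A B) : 3 ≤ B.encard := by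
  obtain ⟨hU, hd, hA2, hB2, hr⟩ := hAB
  by_contra hlt
  have hlt3 : B.encard < 3 := not_le.1 hlt
  have hB2' : B.encard = 2 := le_antisymm
    (by rwa [show (3:ℕ∞) = 2+1 from rfl, ENat.lt_add_one_iff (by norm_num)] at hlt3) hB2
  obtain ⟨e, f, hef, rfl⟩ := encard_eq_two.1 hB2'
  have hBE : ({e, f} : Set α) ⊆ M.E := hU ▸ subset_union_right
  have hAE : A ⊆ M.E := hU ▸ subset_union_left
  have hind : M.Indep {e, f} := hs e (hBE (by simp)) f (hBE (by simp))
  have hrB : eRank M {e, f} = 2 := by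
    rw [eRank_basis' hind.isBasis_self.isBasis', encard_pair hef]
  have hcoind : M.Coindep {e, f} := hcs e (hBE (by simp)) f (hBE (by simp))
  have hcompl : M.E \ ({e, f} : Set α) = A := by
    apply subset_antisymm
    · intro z hz
      rcases (hU ▸ hz.1 : z ∈ A ∪ {e, f}) with h | h
      · exact h
      · exact absurd h hz.2
    · exact fun z hz => ⟨hAE hz, fun hzB => hd.ne_of_mem hz hzB rfl⟩
  have hsp : M.Spanning A := hcompl ▸ hcoind.compl_spanning
  have hrA : eRank M A = eRank M M.E := eRank_spanning hsp
  rw [hrA, hrB] at hr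
  have h1 : eRank M M.E + 2 ≤ eRank M M.E + 1 := hr
  rw [ENat.add_le_add_iff_left (eRank_ground_ne_top hfin)] at h1
  norm_num at h1

private lemma triangle_mem_closure (hT : IsTriangle M T) (heT : e ∈ T) (hTA : T \ {e} ⊆ A)
    (hAE : A ⊆ M.E) : e ∈ M.closure A := by
  obtain ⟨⟨hTE, hdep, hdel⟩, -⟩ := hT
  have hI : M.Indep (T \ {e}) := hdel e heT
  have hins : insert e (T \ {e}) = T := by
    rw [insert_diff_singleton, insert_eq_self.2 heT]
  have hd : M.Dep (insert e (T \ {e})) := by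
    rw [hins]; exact ⟨hdep, hTE⟩
  have := (hI.insert_dep_iff).1 hd
  exact M.closure_subset_closure hTA this.1

private lemma triad_not_mem_closure (hT : IsTriad M T) (heT : e ∈ T) :
    e ∉ M.closure (M.E \ T) := by
  obtain ⟨⟨hTE, hdep, hdel⟩, -⟩ := hT
  have hTE' : T ⊆ M.E := hTE
  intro hcl
  have hcoind : M.Coindep (T \ {e}) := hdel e heT
  have hsp : M.Spanning (M.E \ (T \ {e})) := hcoind.compl_spanning
  have hins : M.E \ (T \ {e}) = insert e (M.E \ T) := by
    ext z
    simp only [mem_diff, mem_insert_iff, mem_singleton_iff, not_and, not_not]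
    constructor
    · rintro ⟨hz, h⟩
      by_cases hzT : z ∈ T
      · exact Or.inl (h hzT)
      · exact Or.inr ⟨hz, hzT⟩
    · rintro (rfl | ⟨hz, hzT⟩)
      · exact ⟨hTE' heT, fun _ => rfl⟩
      · exact ⟨hz, fun h => absurd h hzT⟩
  rw [hins] at hsp
  have hclE : M.closure (insert e (M.E \ T)) = M.closure (M.E \ T) :=
    Matroid.closure_insert_eq_of_mem_closure hcl
  have hsp2 : M.Spanning (M.E \ T) := by
    rw [Matroid.spanning_iff_closure_eq, ← hclE, ← Matroid.spanning_iff_closure_eq]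
    exact hsp
  have : M.Coindep T := by
    have := (Matroid.spanning_iff_compl_coindep (diff_subset)).1 hsp2
    rwa [diff_diff_cancel_left hTE'] at this
  exact hdep this

/-- Moving an element of a triangle/triad across a 2-separation. -/
private lemma moveT (hfin : M.E.Finite) (hs : SimpleM M) (hcs : CosimpleM M)
    (hAB : TwoSep M A B) (hT : IsTriangle M T ∨ IsTriad M T) (heT : e ∈ T) (heB : e ∈ B)
    (hTA : T \ {e} ⊆ A) : TwoSep M (insert e A) (B \ {e}) := by
  have hB3 := twoSep_three_le hfin hs hcs hAB
  obtain ⟨hU, hd, hA2, hB2, hr⟩ := hAB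
  have hAE : A ⊆ M.E := hU ▸ subset_union_left
  have hBE : B ⊆ M.E := hU ▸ subset_union_right
  have heE : e ∈ M.E := hBE heB
  have hrtop := eRank_ground_ne_top hfin
  have key : e ∈ M.closure A ∨ e ∉ M.closure (B \ {e}) := by
    rcases hT with hT | hT
    · exact Or.inl (triangle_mem_closure hT heT hTA hAE)
    · refine Or.inr fun hcl => triad_not_mem_closure hT heT ?_
      refine M.closure_subset_closure (fun z hz => ?_) hcl
      refine ⟨hBE hz.1, fun hzT => ?_⟩
      have : z ∈ T \ {e} := ⟨hzT, hz.2⟩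
      exact hd.ne_of_mem (hTA this) hz.1 rfl
  refine ⟨?_, ?_, ?_, ?_, ?_⟩
  · rw [← hU]
    ext z
    simp only [mem_union, mem_insert_iff, mem_diff, mem_singleton_iff]
    constructor
    · rintro ((rfl | h) | ⟨h, -⟩)
      exacts [Or.inr heB, Or.inl h, Or.inr h]
    · rintro (h | h)
      · exact Or.inl (Or.inr h)
      · by_cases hz : z = e
        · exact Or.inl (Or.inl hz)
        · exact Or.inr ⟨h, hz⟩
  · rw [Set.disjoint_left]
    rintro z (rfl | hz)
    · simp
    · exact fun hzB => hd.ne_of_mem hz hzB.1 rfl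
  · exact hA2.trans (encard_mono (subset_insert _ _))
  · have h1 : (B \ {e}).encard + 1 = B.encard := encard_diff_singleton_add_one heB
    rw [← ENat.add_le_add_iff_right (by norm_num : (1 : ℕ∞) ≠ ⊤), h1]
    exact le_trans (by norm_num) hB3
  · rcases key with he | he
    · rw [eRank_insert_mem_closure hAE he]
      exact le_trans (add_le_add le_rfl (eRank_mono diff_subset)) hr
    · have h2 : eRank M (B \ {e}) + 1 = eRank M B := by
        rw [← eRank_insert_not_mem_closure (diff_subset.trans hBE) heE he,
          insert_diff_singleton, insert_eq_self.2 heB]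
      rw [← ENat.add_le_add_iff_right (by norm_num : (1 : ℕ∞) ≠ ⊤)]
      calc eRank M (insert e A) + eRank M (B \ {e}) + 1
          = eRank M (insert e A) + (eRank M (B \ {e}) + 1) := by ring
        _ = eRank M (insert e A) + eRank M B := by rw [h2]
        _ ≤ (eRank M A + 1) + eRank M B := add_le_add (eRank_insert_le M e A) le_rfl
        _ = (eRank M A + eRank M B) + 1 := by ring
        _ ≤ (eRank M M.E + 1) + 1 := add_le_add hr le_rfl

private lemma pair_diff_right {a b c : α} (hac : a ≠ c) (hbc : b ≠ c) :
    ({a, b, c} : Set α) \ {c} = {a, b} := by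
  ext z
  simp only [mem_diff, mem_insert_iff, mem_singleton_iff]
  constructor
  · rintro ⟨(rfl | rfl | rfl), hz⟩
    exacts [Or.inl rfl, Or.inr rfl, absurd rfl hz]
  · rintro (rfl | rfl)
    exacts [⟨Or.inl rfl, hac⟩, ⟨Or.inr (Or.inl rfl), hbc⟩]

private lemma triple_diff_mid {a b c : α} (hab : a ≠ b) (hcb : c ≠ b) :
    ({a, b, c} : Set α) \ {b} = {a, c} := by
  ext z
  simp only [mem_diff, mem_insert_iff, mem_singleton_iff]
  constructor
  · rintro ⟨(rfl | rfl | rfl), hz⟩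
    exacts [Or.inl rfl, absurd rfl hz, Or.inr rfl]
  · rintro (rfl | rfl)
    exacts [⟨Or.inl rfl, hab⟩, ⟨Or.inr (Or.inr rfl), hcb⟩]

private lemma triple_diff_left {a b c : α} (hba : b ≠ a) (hca : c ≠ a) :
    ({a, b, c} : Set α) \ {a} = {b, c} := by
  ext z
  simp only [mem_diff, mem_insert_iff, mem_singleton_iff]
  constructor
  · rintro ⟨(rfl | rfl | rfl), hz⟩
    exacts [absurd rfl hz, Or.inl rfl, Or.inr rfl]
  · rintro (rfl | rfl)
    exacts [⟨Or.inr (Or.inl rfl), hba⟩, ⟨Or.inr (Or.inr rfl), hca⟩]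

/-- Sweeping a fan into the side of a 2-separation containing its first two elements. -/
private lemma sweep {k : ℕ} {x : ℕ → α} (hfin : M.E.Finite) (hs : SimpleM M)
    (hcs : CosimpleM M) (hk : 3 ≤ k) (hinj : Set.InjOn x (Set.Icc 1 k))
    (hmem : ∀ i, 1 ≤ i → i ≤ k → x i ∈ M.E)
    (htri : ∀ i, 1 ≤ i → i + 2 ≤ k →
      IsTriangle M {x i, x (i+1), x (i+2)} ∨ IsTriad M {x i, x (i+1), x (i+2)})
    (hAB : TwoSep M A B) (h1 : x 1 ∈ A) (h2 : x 2 ∈ A) :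
    ∃ A' B', TwoSep M A' B' ∧ ∀ i, 1 ≤ i → i ≤ k → x i ∈ A' := by
  have hne : ∀ i j, 1 ≤ i → i ≤ k → 1 ≤ j → j ≤ k → i ≠ j → x i ≠ x j := by
    intro i j hi1 hik hj1 hjk hij hxy
    exact hij (hinj ⟨hi1, hik⟩ ⟨hj1, hjk⟩ hxy)
  suffices hcl : ∀ j, 2 ≤ j → j ≤ k → ∃ A' B', TwoSep M A' B' ∧ ∀ i, 1 ≤ i → i ≤ j → x i ∈ A' by
    exact hcl k (by omega) le_rfl
  intro j hj2
  induction j, hj2 using Nat.le_induction with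
  | base =>
    intro _
    refine ⟨A, B, hAB, fun i hi1 hi2 => ?_⟩
    rcases (by omega : i = 1 ∨ i = 2) with rfl | rfl
    · exact h1
    · exact h2
  | succ j hj IH =>
    intro hjk
    obtain ⟨A', B', hsep, hall⟩ := IH (by omega)
    have e1 : j - 1 + 1 = j := by omega
    have e2 : j - 1 + 2 = j + 1 := by omega
    have hT := htri (j - 1) (by omega) (by omega)
    rw [e1, e2] at hT
    by_cases hxa : x (j + 1) ∈ A'
    · refine ⟨A', B', hsep, fun i hi1 hi2 => ?_⟩
      rcases (by omega : i ≤ j ∨ i = j + 1) with h | rfl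
      · exact hall i hi1 h
      · exact hxa
    · have hxB : x (j + 1) ∈ B' := by
        have hE : x (j + 1) ∈ A' ∪ B' := hsep.1 ▸ hmem (j + 1) (by omega) hjk
        rcases hE with h | h
        · exact absurd h hxa
        · exact h
      have hdiff : ({x (j-1), x j, x (j+1)} : Set α) \ {x (j+1)} = {x (j-1), x j} :=
        pair_diff_right (hne _ _ (by omega) (by omega) (by omega) hjk (by omega))
          (hne _ _ (by omega) (by omega) (by omega) hjk (by omega))
      have hsub : ({x (j-1), x j} : Set α) ⊆ A' :=
        insert_subset (hall (j-1) (by omega) (by omega))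
          (singleton_subset_iff.2 (hall j (by omega) le_rfl))
      have hmove := moveT hfin hs hcs hsep hT (by simp) hxB (hdiff ▸ hsub)
      refine ⟨insert (x (j+1)) A', B' \ {x (j+1)}, hmove, fun i hi1 hi2 => ?_⟩
      rcases (by omega : i ≤ j ∨ i = j + 1) with h | rfl
      · exact subset_insert _ _ (hall i hi1 h)
      · exact mem_insert _ _

end Aux

/-- If `M` is a simple, cosimple, connected matroid with a fan `(x 1, …, x k)` and a
2-separation, then `M` has a 2-separation whose first side contains the fan. -/
theorem statement15 {α : Type} (M : Matroid α) (hfin : M.E.Finite) (hs : SimpleM M) (hcs : CosimpleM M)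
    (hconn : ConnectedM M) (k : ℕ) (x : ℕ → α) (hfan : IsFan M k x)
    (A B : Set α) (hAB : TwoSep M A B) :
    ∃ A' B', TwoSep M A' B' ∧ ∀ i, 1 ≤ i → i ≤ k → x i ∈ A' := by
  obtain ⟨hk, hinj, hmem, hfan'⟩ := hfan
  have htri : ∀ i, 1 ≤ i → i + 2 ≤ k →
      IsTriangle M {x i, x (i+1), x (i+2)} ∨ IsTriad M {x i, x (i+1), x (i+2)} :=
    fun i h1 h2 => (hfan' i h1 h2).1
  have hne : ∀ i j, 1 ≤ i → i ≤ k → 1 ≤ j → j ≤ k → i ≠ j → x i ≠ x j :=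
    fun i j hi1 hik hj1 hjk hij hxy => hij (hinj ⟨hi1, hik⟩ ⟨hj1, hjk⟩ hxy)
  have hloc : ∀ i, 1 ≤ i → i ≤ k → x i ∈ A ∨ x i ∈ B := by
    intro i hi1 hi2
    have h := hmem i hi1 hi2
    rw [← hAB.1] at h
    exact h
  have hT := htri 1 le_rfl hk
  have e2 : (1:ℕ) + 1 = 2 := by norm_num
  have e3 : (1:ℕ) + 2 = 3 := by norm_num
  rw [e2, e3] at hT
  have d12 : x 1 ≠ x 2 := hne 1 2 (by omega) (by omega) (by omega) (by omega) (by omega)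
  have d13 : x 1 ≠ x 3 := hne 1 3 (by omega) (by omega) (by omega) (by omega) (by omega)
  have d23 : x 2 ≠ x 3 := hne 2 3 (by omega) (by omega) (by omega) (by omega) (by omega)
  rcases hloc 1 (by omega) (by omega) with h1A | h1B <;>
    rcases hloc 2 (by omega) (by omega) with h2A | h2B
  · exact sweep hfin hs hcs hk hinj hmem htri hAB h1A h2A
  · rcases hloc 3 (by omega) (by omega) with h3A | h3B
    · have hdiff : ({x 1, x 2, x 3} : Set α) \ {x 2} = {x 1, x 3} :=
        triple_diff_mid d12 d23.symm
      have hmove := moveT hfin hs hcs hAB hT (by simp) h2B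
        (hdiff ▸ insert_subset h1A (singleton_subset_iff.2 h3A))
      exact sweep hfin hs hcs hk hinj hmem htri hmove
        (subset_insert _ _ h1A) (mem_insert _ _)
    · have hdiff : ({x 1, x 2, x 3} : Set α) \ {x 1} = {x 2, x 3} :=
        triple_diff_left d12.symm d13.symm
      have hmove := moveT hfin hs hcs (twoSep_symm hAB) hT (by simp) h1A
        (by rw [hdiff]; exact insert_subset h2B (singleton_subset_iff.2 h3B))
      exact sweep hfin hs hcs hk hinj hmem htri hmove
        (mem_insert _ _) (subset_insert _ _ h2B)
  · rcases hloc 3 (by omega) (by omega) with h3A | h3B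
    · have hdiff : ({x 1, x 2, x 3} : Set α) \ {x 1} = {x 2, x 3} :=
        triple_diff_left d12.symm d13.symm
      have hmove := moveT hfin hs hcs hAB hT (by simp) h1B
        (by rw [hdiff]; exact insert_subset h2A (singleton_subset_iff.2 h3A))
      exact sweep hfin hs hcs hk hinj hmem htri hmove
        (mem_insert _ _) (subset_insert _ _ h2A)
    · have hdiff : ({x 1, x 2, x 3} : Set α) \ {x 2} = {x 1, x 3} :=
        triple_diff_mid d12 d23.symm
      have hmove := moveT hfin hs hcs (twoSep_symm hAB) hT (by simp) h2A
        (hdiff ▸ insert_subset h1B (singleton_subset_iff.2 h3B))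
      exact sweep hfin hs hcs hk hinj hmem htri hmove
        (subset_insert _ _ h1B) (mem_insert _ _)
  · exact sweep hfin hs hcs hk hinj hmem htri (twoSep_symm hAB) h1B h2B

end ExMinors
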